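/- Let Σ = (X, 𝒟, φ) be a forward complete abstract dynamical system. Then Σ is robustly forward complete and 0 is a robust equilibrium point of Σ if and only if there exist a class-K∞ function σ and a continuous function χ : [0,∞)² → [0,∞) with χ(r,·) of class K for each r > 0 and χ(0,t) = 0 for all t ≥ 0, such that ‖φ(t,x,d)‖ ≤ σ(‖x‖) + χ(‖x‖, t) for all x ∈ X, d ∈ 𝒟, t ≥ 0. -/

import Mathlib

open Filter Set

/-- Class `K` comparison functions on `[0,∞)`. -/
def ClassK (f : ℝ → ℝ) : Prop :=
  ContinuousOn f (Ici 0) ∧ StrictMonoOn f (Ici 0) ∧ f 0 = 0 ∧ ∀ r, 0 ≤ r → 0 ≤ f r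

/-- Class `K∞` comparison functions. -/
def ClassKInf (f : ℝ → ℝ) : Prop :=
  ClassK f ∧ ∀ M : ℝ, ∃ r, 0 ≤ r ∧ M < f r

/-- Class `KL` comparison functions. -/
def ClassKL (β : ℝ → ℝ → ℝ) : Prop :=
  (∀ t, 0 ≤ t → ClassK (fun r => β r t)) ∧
  ∀ r, 0 < r → ContinuousOn (β r) (Ici 0) ∧ AntitoneOn (β r) (Ici 0) ∧
    Tendsto (β r) atTop (nhds 0)

/-- Right-hand lower Dini derivative. -/
noncomputable def dini (f : ℝ → ℝ) (t : ℝ) : ℝ :=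
  liminf (fun τ => (f (t + τ) - f t) / τ) (nhdsWithin 0 (Ioi 0))

/-- An abstract forward-complete dynamical system with disturbances. -/
structure DynSys (X : Type*) [NormedAddCommGroup X] (D : Type*) where
  /-- time shift on disturbances -/
  shift : ℝ → D → D
  /-- transition map -/
  phi : ℝ → X → D → X
  identity : ∀ x d, phi 0 x d = x
  cont : ∀ x d, ContinuousOn (fun t => phi t x d) (Ici 0)
  cocycle : ∀ t h x d, 0 ≤ t → 0 ≤ h →
    phi h (phi t x d) (shift t d) = phi (t + h) x d

/-- Robust forward completeness. -/
def DynSys.RFC {X D : Type*} [NormedAddCommGroup X] (S : DynSys X D) : Prop :=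
  ∀ C > (0:ℝ), ∀ τ > (0:ℝ), ∃ B : ℝ, ∀ (x : X) (d : D) (t : ℝ),
    ‖x‖ ≤ C → 0 ≤ t → t ≤ τ → ‖S.phi t x d‖ ≤ B

/-- `0` is an equilibrium point. -/
def DynSys.Equilibrium {X D : Type*} [NormedAddCommGroup X] (S : DynSys X D) : Prop :=
  ∀ (t : ℝ) (d : D), 0 ≤ t → S.phi t 0 d = 0

/-- `0` is a robust equilibrium point. -/
def DynSys.REP {X D : Type*} [NormedAddCommGroup X] (S : DynSys X D) : Prop :=
  S.Equilibrium ∧ ∀ ε > (0:ℝ), ∀ h > (0:ℝ), ∃ δ > (0:ℝ), ∀ (t : ℝ) (x : X) (d : D),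
    0 ≤ t → t ≤ h → ‖x‖ ≤ δ → ‖S.phi t x d‖ ≤ ε

lemma majorant (f : ℝ → ℝ) (hmono : MonotoneOn f (Ici 0))
    (hnn : ∀ r, 0 ≤ r → 0 ≤ f r)
    (h0 : ∀ ε > (0:ℝ), ∃ δ > (0:ℝ), f δ ≤ ε) :
    ∃ g, ClassKInf g ∧ ∀ r, 0 ≤ r → f r ≤ g r := by
  set π := Real.pi with hπ
  have hπ4 : π < 4 := by rw [hπ]; linarith [Real.pi_lt_d2]
  have hπ3 : 3 < π := by rw [hπ]; linarith [Real.pi_gt_three]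
  set u : ℝ → ℝ := fun s => Real.arctan (f s) with hu
  have hu_nn : ∀ s, 0 ≤ s → 0 ≤ u s := fun s hs => by
    simpa [hu, Real.arctan_zero] using Real.arctan_strictMono.monotone (hnn s hs)
  have hu_lt : ∀ s, u s < π / 2 := fun s => Real.arctan_lt_pi_div_two _
  have hu_mono : ∀ s t, 0 ≤ s → s ≤ t → u s ≤ u t := fun s t hs hst =>
    Real.arctan_strictMono.monotone (hmono hs (le_trans hs hst) hst)
  set E : ℝ → Set ℝ := fun a => (fun s => u s - |Real.log s - a|) '' Ioi 0 with hE
  have hE_ne : ∀ a, (E a).Nonempty := fun a => ⟨_, ⟨1, by norm_num, rfl⟩⟩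
  have hE_bdd : ∀ a, BddAbove (E a) := by
    intro a
    refine ⟨π / 2, ?_⟩
    rintro y ⟨s, hs, rfl⟩
    calc u s - |Real.log s - a| ≤ u s := sub_le_self _ (abs_nonneg _)
      _ ≤ π / 2 := (hu_lt s).le
  set v : ℝ → ℝ := fun a => sSup (E a) with hv
  have hv_ge : ∀ a, u (Real.exp a) ≤ v a := by
    intro a
    refine le_csSup (hE_bdd a) ⟨Real.exp a, Real.exp_pos a, ?_⟩
    simp [Real.log_exp]
  have hv_mono : Monotone v := by
    intro a b hab
    refine csSup_le (hE_ne a) ?_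
    rintro y ⟨s, hs, rfl⟩
    have hs' : (0:ℝ) < s * Real.exp (b - a) := mul_pos hs (Real.exp_pos _)
    have hlog : Real.log (s * Real.exp (b - a)) = Real.log s + (b - a) := by
      rw [Real.log_mul (ne_of_gt hs) (Real.exp_ne_zero _), Real.log_exp]
    have h1 : u s ≤ u (s * Real.exp (b - a)) := by
      refine hu_mono s _ hs.le ?_
      nlinarith [Real.one_le_exp (sub_nonneg.mpr hab), hs]
    have h2 : u (s * Real.exp (b - a)) - |Real.log (s * Real.exp (b - a)) - b| ≤ v b :=
      le_csSup (hE_bdd b) ⟨_, hs', rfl⟩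
    have h3 : |Real.log (s * Real.exp (b - a)) - b| = |Real.log s - a| := by
      rw [hlog]; ring_nf
    calc u s - |Real.log s - a| ≤ u (s * Real.exp (b - a)) - |Real.log s - a| := by linarith
      _ = u (s * Real.exp (b - a)) - |Real.log (s * Real.exp (b - a)) - b| := by rw [h3]
      _ ≤ v b := h2
  have hv_lipest : ∀ a b, v a ≤ v b + |a - b| := by
    intro a b
    refine csSup_le (hE_ne a) ?_
    rintro y ⟨s, hs, rfl⟩
    dsimp only
    have h1 : u s - |Real.log s - b| ≤ v b := le_csSup (hE_bdd b) ⟨s, hs, rfl⟩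
    have h2 : |Real.log s - b| ≤ |Real.log s - a| + |a - b| := by
      calc |Real.log s - b| = |(Real.log s - a) + (a - b)| := by ring_nf
        _ ≤ |Real.log s - a| + |a - b| := abs_add_le _ _
    linarith
  have hv_cont : Continuous v := by
    have : LipschitzWith 1 v := by
      refine LipschitzWith.of_dist_le_mul ?_
      intro a b
      rw [NNReal.coe_one, one_mul, Real.dist_eq, Real.dist_eq]
      rw [abs_sub_le_iff]
      constructor
      · have := hv_lipest a b; linarith
      · have := hv_lipest b a
        have : v b ≤ v a + |a - b| := by rw [abs_sub_comm]; exact hv_lipest b a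
        linarith
    exact this.continuous
  have hv_le : ∀ a, v a ≤ max (π / 2 - 2) (u (Real.exp (a + 2))) := by
    intro a
    refine csSup_le (hE_ne a) ?_
    rintro y ⟨s, hs, rfl⟩
    by_cases hcase : Real.log s - a ≤ 2
    · have hsle : s ≤ Real.exp (a + 2) := by
        have : Real.log s ≤ a + 2 := by linarith
        calc s = Real.exp (Real.log s) := (Real.exp_log hs).symm
          _ ≤ Real.exp (a + 2) := Real.exp_le_exp.mpr this
      refine le_trans ?_ (le_max_right _ _)
      calc u s - |Real.log s - a| ≤ u s := sub_le_self _ (abs_nonneg _)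
        _ ≤ u (Real.exp (a + 2)) := hu_mono _ _ hs.le hsle
    · push_neg at hcase
      refine le_trans ?_ (le_max_left _ _)
      have : (2:ℝ) ≤ |Real.log s - a| := le_trans hcase.le (le_abs_self _)
      have := hu_lt s
      linarith
  -- w
  set w : ℝ → ℝ := fun r => if r ≤ 0 then 0 else v (Real.log r) with hw
  have hw0 : w 0 = 0 := if_pos le_rfl
  have hwpos : ∀ r, 0 < r → w r = v (Real.log r) := fun r hr => if_neg (not_le.mpr hr)
  have hw_ge : ∀ r, 0 < r → u r ≤ w r := by
    intro r hr
    rw [hwpos r hr]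
    have := hv_ge (Real.log r)
    rwa [Real.exp_log hr] at this
  have hw_nn : ∀ r, 0 ≤ w r := by
    intro r
    by_cases hr : r ≤ 0
    · rw [hw]; simp [hr]
    · push_neg at hr
      exact le_trans (hu_nn r hr.le) (hw_ge r hr)
  have hw_lt : ∀ r, w r < π / 2 := by
    intro r
    by_cases hr : r ≤ 0
    · rw [hw]; simp only [hr, if_pos]; positivity
    · push_neg at hr
      rw [hwpos r hr]
      refine lt_of_le_of_lt (hv_le _) (max_lt (by linarith) (hu_lt _))
  have hw_mono : Monotone w := by
    intro r r' hrr
    by_cases hr' : r' ≤ 0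
    · have hr : r ≤ 0 := le_trans hrr hr'
      rw [hw]; simp [hr, hr']
    · push_neg at hr'
      by_cases hr : r ≤ 0
      · rw [hw]; simp only [hr, if_pos]; exact hw_nn r'
      · push_neg at hr
        rw [hwpos r hr, hwpos r' hr']
        exact hv_mono ((Real.log_le_log_iff hr hr').mpr hrr)
  have hw_small : ∀ ε > (0:ℝ), ∃ ρ > (0:ℝ), w ρ < ε := by
    intro ε hε
    set ε' := min (ε / 2) 1 with hε'
    have hε'0 : 0 < ε' := lt_min (by linarith) one_pos
    have hε'lt : ε' < π / 2 := lt_of_le_of_lt (min_le_right _ _) (by linarith)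
    have htanpos : 0 < Real.tan ε' := Real.tan_pos_of_pos_of_lt_pi_div_two hε'0 hε'lt
    obtain ⟨δ, hδ, hfδ⟩ := h0 (Real.tan ε') htanpos
    refine ⟨δ * Real.exp (-2), mul_pos hδ (Real.exp_pos _), ?_⟩
    have hρ : (0:ℝ) < δ * Real.exp (-2) := mul_pos hδ (Real.exp_pos _)
    rw [hwpos _ hρ]
    have hlogρ : Real.log (δ * Real.exp (-2)) = Real.log δ - 2 := by
      rw [Real.log_mul (ne_of_gt hδ) (Real.exp_ne_zero _), Real.log_exp]; ring
    refine lt_of_le_of_lt (a := v (Real.log (δ * Real.exp (-2)))) ?_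
      (lt_of_le_of_lt (min_le_left _ _) (by linarith) : ε' < ε)
    refine csSup_le (hE_ne _) ?_
    rintro y ⟨s, hs, rfl⟩
    dsimp only
    by_cases hsδ : s ≤ δ
    · have h1 : u s ≤ ε' := by
        have : f s ≤ Real.tan ε' := le_trans (hmono (mem_Ici.mpr (le_of_lt (mem_Ioi.mp hs))) (mem_Ici.mpr hδ.le) hsδ) hfδ
        have h2 : u s ≤ Real.arctan (Real.tan ε') := Real.arctan_strictMono.monotone this
        rwa [Real.arctan_tan (by linarith) hε'lt] at h2
      calc u s - |Real.log s - Real.log (δ * Real.exp (-2))| ≤ u s := sub_le_self _ (abs_nonneg _)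
        _ ≤ ε' := h1
    · push_neg at hsδ
      have h2 : (2:ℝ) ≤ Real.log s - Real.log (δ * Real.exp (-2)) := by
        rw [hlogρ]
        have : Real.log δ ≤ Real.log s := (Real.log_le_log_iff hδ (lt_trans hδ hsδ)).mpr hsδ.le
        linarith
      have h3 : (2:ℝ) ≤ |Real.log s - Real.log (δ * Real.exp (-2))| := le_trans h2 (le_abs_self _)
      have := hu_lt s
      linarith
  have hw_cont : ContinuousOn w (Ici 0) := by
    intro r hr
    rcases eq_or_lt_of_le (mem_Ici.mp hr) with heq | hlt
    · subst heq
      rw [Metric.continuousWithinAt_iff]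
      intro ε hε
      obtain ⟨ρ, hρ, hwρ⟩ := hw_small ε hε
      refine ⟨ρ, hρ, ?_⟩
      intro x hx hdist
      rw [Real.dist_eq, sub_zero, abs_of_nonneg (mem_Ici.mp hx)] at hdist
      rw [Real.dist_eq, hw0, sub_zero, abs_of_nonneg (hw_nn x)]
      exact lt_of_le_of_lt (hw_mono hdist.le) hwρ
    · have : ContinuousAt w r := by
        have hev : ∀ᶠ x in nhds r, x ∈ Ioi (0:ℝ) := Ioi_mem_nhds hlt
        refine ContinuousAt.congr ((hv_cont.continuousAt).comp (Real.continuousAt_log (ne_of_gt hlt))) ?_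
        filter_upwards [hev] with x hx
        exact (hwpos x hx).symm
      exact this.continuousWithinAt
  -- g
  have hw_mem : ∀ r, w r ∈ Ioo (-(π / 2)) (π / 2) := fun r =>
    ⟨lt_of_lt_of_le (by linarith) (hw_nn r), hw_lt r⟩
  have htan_mono := Real.strictMonoOn_tan.monotoneOn
  have h0mem : (0:ℝ) ∈ Ioo (-(π / 2)) (π / 2) := ⟨by linarith, by linarith⟩
  refine ⟨fun r => Real.tan (w r) + r, ⟨⟨?_, ?_, ?_, ?_⟩, ?_⟩, ?_⟩
  · -- continuity
    intro r hr
    refine ContinuousWithinAt.add ?_ continuousWithinAt_id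
    exact (Real.continuousAt_tan.mpr
      (ne_of_gt (Real.cos_pos_of_mem_Ioo (hw_mem r)))).comp_continuousWithinAt (hw_cont r hr)
  · -- strict mono
    intro r hr r' hr' hlt
    exact add_lt_add_of_le_of_lt (htan_mono (hw_mem r) (hw_mem r') (hw_mono hlt.le)) hlt
  · show Real.tan (w 0) + 0 = 0
    rw [hw0, Real.tan_zero, add_zero]
  · intro r hr
    show 0 ≤ Real.tan (w r) + r
    have : Real.tan 0 ≤ Real.tan (w r) := htan_mono h0mem (hw_mem r) (hw_nn r)
    rw [Real.tan_zero] at this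
    linarith
  · -- unbounded
    intro M
    refine ⟨max M 0 + 1, by positivity, ?_⟩
    show M < Real.tan (w (max M 0 + 1)) + (max M 0 + 1)
    have h1 : Real.tan 0 ≤ Real.tan (w (max M 0 + 1)) :=
      htan_mono h0mem (hw_mem _) (hw_nn _)
    rw [Real.tan_zero] at h1
    have : M ≤ max M 0 := le_max_left _ _
    linarith
  · -- majorant
    intro r hr
    rcases eq_or_lt_of_le hr with heq | hlt
    · subst heq
      have hf0 : f 0 ≤ 0 := by
        by_contra hpos
        push_neg at hpos
        obtain ⟨δ, hδ, hfδ⟩ := h0 (f 0 / 2) (by linarith)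
        have := hmono (le_refl (0:ℝ)) hδ.le hδ.le
        linarith
      show f 0 ≤ Real.tan (w 0) + 0
      rw [hw0, Real.tan_zero, add_zero]
      exact hf0
    · have h1 : f r = Real.tan (u r) := (Real.tan_arctan _).symm
      have humem : u r ∈ Ioo (-(π / 2)) (π / 2) :=
        ⟨lt_of_lt_of_le (by linarith) (hu_nn r hr), hu_lt r⟩
      have h2 : Real.tan (u r) ≤ Real.tan (w r) :=
        htan_mono humem (hw_mem r) (hw_ge r hlt)
      show f r ≤ Real.tan (w r) + r
      linarith


noncomputable section

def clampR : ℝ → ℝ := fun x => max 0 (min x 1)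

def cAux (G : ℕ → ℝ → ℝ) : ℕ → ℝ → ℝ := fun k r => r + G (k+1) r

def SfAux (G : ℕ → ℝ → ℝ) : ℕ → ℝ → ℝ → ℝ :=
  fun N r t => ∑ k ∈ Finset.range N, cAux G k r * clampR (t - k)

def chiAux (G : ℕ → ℝ → ℝ) : ℝ → ℝ → ℝ := fun r t => SfAux G (⌊t⌋.toNat + 1) r t

end

lemma chi_construction (G : ℕ → ℝ → ℝ)
    (hGc : ∀ m, ContinuousOn (G m) (Ici 0))
    (hG0 : ∀ m, G m 0 = 0)
    (hGnn : ∀ m r, 0 ≤ r → 0 ≤ G m r) :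
    ∃ χ : ℝ → ℝ → ℝ,
      ContinuousOn (fun p : ℝ × ℝ => χ p.1 p.2) (Ici 0 ×ˢ Ici 0) ∧
      (∀ r t : ℝ, 0 ≤ r → 0 ≤ t → 0 ≤ χ r t) ∧
      (∀ r : ℝ, 0 < r → ClassK (χ r)) ∧
      (∀ t : ℝ, 0 ≤ t → χ 0 t = 0) ∧
      (∀ (m : ℕ) (r t : ℝ), 0 ≤ r → (m:ℝ) ≤ t → G m r ≤ G 0 r + χ r t) := by
  have clamp_mono : Monotone clampR := monotone_const.max (monotone_id.min monotone_const)
  have clamp_cont : Continuous clampR := continuous_const.max (continuous_id.min continuous_const)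
  have clamp_nonneg : ∀ x, 0 ≤ clampR x := fun x => le_max_left _ _
  have clamp_nonpos : ∀ x, x ≤ 0 → clampR x = 0 := fun x hx =>
    max_eq_left (le_trans (min_le_left _ _) hx)
  have clamp_one : clampR 1 = 1 := by unfold clampR; norm_num
  have clamp_id : ∀ x, 0 ≤ x → x ≤ 1 → clampR x = x := fun x h1 h2 => by
    unfold clampR; simp only [min_eq_left h2, max_eq_right h1]
  have hc_nn : ∀ k r, 0 ≤ r → 0 ≤ cAux G k r := fun k r hr => add_nonneg hr (hGnn _ _ hr)
  have hc_0 : ∀ k, cAux G k 0 = 0 := fun k => by unfold cAux; simp [hG0]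
  have hext : ∀ (N M : ℕ) (r t : ℝ), N ≤ M → t ≤ N → SfAux G M r t = SfAux G N r t := by
    intro N M r t hNM htN
    unfold SfAux
    refine (Finset.sum_subset (Finset.range_subset_range.mpr hNM) ?_).symm
    intro k _ hkN
    have hk : N ≤ k := Nat.le_of_not_lt (fun h => hkN (Finset.mem_range.mpr h))
    have hk' : t - k ≤ 0 := by
      have : (N:ℝ) ≤ k := by exact_mod_cast hk
      linarith
    rw [clamp_nonpos _ hk', mul_zero]
  have hfloor_cast : ∀ t : ℝ, 0 ≤ t → ((⌊t⌋.toNat : ℝ)) = (⌊t⌋ : ℝ) := by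
    intro t ht
    exact_mod_cast congrArg (Int.cast : ℤ → ℝ) (Int.toNat_of_nonneg (Int.floor_nonneg.mpr ht))
  have hfloor_le : ∀ t : ℝ, 0 ≤ t → t ≤ ((⌊t⌋.toNat + 1 : ℕ) : ℝ) := by
    intro t ht
    push_cast
    rw [hfloor_cast t ht]
    linarith [Int.lt_floor_add_one t]
  have hle : ∀ (N : ℕ) (t : ℝ), 0 ≤ t → t < N → ⌊t⌋.toNat + 1 ≤ N := by
    intro N t ht htN
    have h0 : (0:ℤ) ≤ ⌊t⌋ := Int.floor_nonneg.mpr ht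
    have h1 : ⌊t⌋ < (N:ℤ) := Int.floor_lt.mpr (by exact_mod_cast htN)
    omega
  have hχN : ∀ (N : ℕ) (r t : ℝ), 0 ≤ t → t < N → chiAux G r t = SfAux G N r t := by
    intro N r t ht htN
    exact (hext _ N r t (hle N t ht htN) (hfloor_le t ht)).symm
  have htltself : ∀ t : ℝ, 0 ≤ t → t < ((⌊t⌋.toNat + 1 : ℕ) : ℝ) := by
    intro t ht
    push_cast
    rw [hfloor_cast t ht]
    exact Int.lt_floor_add_one t
  -- joint continuity
  have hSc : ∀ N, ContinuousOn (fun p : ℝ × ℝ => SfAux G N p.1 p.2) (Ici 0 ×ˢ Ici 0) := by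
    intro N
    unfold SfAux
    apply continuousOn_finset_sum
    intro k _
    have h1 : ContinuousOn (fun p : ℝ × ℝ => cAux G k p.1) (Ici (0:ℝ) ×ˢ Ici (0:ℝ)) := by
      unfold cAux
      refine ContinuousOn.add continuousOn_fst ?_
      exact (hGc (k+1)).comp continuousOn_fst (fun p hp => hp.1)
    have h2 : Continuous fun p : ℝ × ℝ => clampR (p.2 - k) :=
      clamp_cont.comp (continuous_snd.sub continuous_const)
    exact h1.mul h2.continuousOn
  have hχc : ContinuousOn (fun p : ℝ × ℝ => chiAux G p.1 p.2) (Ici 0 ×ˢ Ici 0) := by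
    intro p hp
    have hp2 : (0:ℝ) ≤ p.2 := hp.2
    have hpN : p.2 < ((⌊p.2⌋.toNat + 1 : ℕ) : ℝ) := htltself p.2 hp2
    refine ((hSc (⌊p.2⌋.toNat + 1)) p hp).congr_of_eventuallyEq ?_ ?_
    · have hU : {q : ℝ × ℝ | q.2 < ((⌊p.2⌋.toNat + 1 : ℕ) : ℝ)} ∈
          nhdsWithin p (Ici 0 ×ˢ Ici 0) :=
        mem_nhdsWithin_of_mem_nhds ((isOpen_Iio.preimage continuous_snd).mem_nhds hpN)
      filter_upwards [hU, self_mem_nhdsWithin] with q hq hqs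
      exact hχN (⌊p.2⌋.toNat + 1) q.1 q.2 hqs.2 hq
    · exact hχN (⌊p.2⌋.toNat + 1) p.1 p.2 hp2 hpN
  -- nonneg
  have hSnn : ∀ (N : ℕ) (r t : ℝ), 0 ≤ r → 0 ≤ SfAux G N r t := by
    intro N r t hr
    exact Finset.sum_nonneg fun k _ => mul_nonneg (hc_nn k r hr) (clamp_nonneg _)
  have hχnn : ∀ r t : ℝ, 0 ≤ r → 0 ≤ t → 0 ≤ chiAux G r t := fun r t hr _ => hSnn _ r t hr
  -- monotone in t
  have hSmono : ∀ (N : ℕ) (r : ℝ), 0 ≤ r → ∀ t t' : ℝ, t ≤ t' →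
      SfAux G N r t ≤ SfAux G N r t' := by
    intro N r hr t t' htt
    refine Finset.sum_le_sum fun k _ => ?_
    exact mul_le_mul_of_nonneg_left (clamp_mono (by linarith : t - k ≤ t' - k)) (hc_nn k r hr)
  have hχmono : ∀ r : ℝ, 0 ≤ r → ∀ t t' : ℝ, 0 ≤ t → t ≤ t' →
      chiAux G r t ≤ chiAux G r t' := by
    intro r hr t t' ht htt
    have ht' : 0 ≤ t' := le_trans ht htt
    have h1 : t' < ((⌊t'⌋.toNat + 1 : ℕ) : ℝ) := htltself t' ht'
    rw [hχN (⌊t'⌋.toNat + 1) r t ht (lt_of_le_of_lt htt h1), hχN (⌊t'⌋.toNat + 1) r t' ht' h1]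
    exact hSmono _ r hr t t' htt
  -- strict monotone in t for r > 0
  have hχsm : ∀ r : ℝ, 0 < r → StrictMonoOn (chiAux G r) (Ici 0) := by
    intro r hr t ht t' ht' htt
    have ht0 : (0:ℝ) ≤ t := ht
    have ht0' : (0:ℝ) ≤ t' := ht'
    have h1 : t' < ((⌊t'⌋.toNat + 1 : ℕ) : ℝ) := htltself t' ht0'
    show chiAux G r t < chiAux G r t'
    rw [hχN (⌊t'⌋.toNat + 1) r t ht0 (lt_trans htt h1), hχN (⌊t'⌋.toNat + 1) r t' ht0' h1]
    unfold SfAux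
    refine Finset.sum_lt_sum ?_ ?_
    · intro k _
      exact mul_le_mul_of_nonneg_left (clamp_mono (by linarith : t - k ≤ t' - k)) (hc_nn k r hr.le)
    · refine ⟨⌊t⌋.toNat, ?_, ?_⟩
      · refine Finset.mem_range.mpr ?_
        have : ⌊t⌋ ≤ ⌊t'⌋ := Int.floor_le_floor htt.le
        have h0 : (0:ℤ) ≤ ⌊t⌋ := Int.floor_nonneg.mpr ht0
        omega
      · have hk : ((⌊t⌋.toNat : ℝ)) = (⌊t⌋ : ℝ) := hfloor_cast t ht0
        have ha1 : (0:ℝ) ≤ t - ⌊t⌋.toNat := by rw [hk]; linarith [Int.floor_le t]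
        have ha2 : t - ⌊t⌋.toNat < 1 := by rw [hk]; linarith [Int.lt_floor_add_one t]
        have hclt : clampR (t - ⌊t⌋.toNat) < clampR (t' - ⌊t⌋.toNat) := by
          rw [clamp_id _ ha1 ha2.le]
          calc t - ⌊t⌋.toNat < min (t' - ⌊t⌋.toNat) 1 := lt_min (by linarith) ha2
            _ ≤ clampR (t' - ⌊t⌋.toNat) := le_max_right _ _
        have hcpos : 0 < cAux G ⌊t⌋.toNat r := by
          have := hGnn (⌊t⌋.toNat + 1) r hr.le
          unfold cAux; linarith
        exact mul_lt_mul_of_pos_left hclt hcpos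
  -- chi r 0 = 0
  have hχr0 : ∀ r : ℝ, chiAux G r 0 = 0 := by
    intro r
    have h := hχN 1 r 0 le_rfl (by norm_num)
    rw [h]
    unfold SfAux
    simp only [Finset.sum_range_one, Nat.cast_zero, sub_zero]
    rw [clamp_nonpos 0 le_rfl, mul_zero]
  -- chi 0 t = 0
  have hχ0 : ∀ t : ℝ, 0 ≤ t → chiAux G 0 t = 0 := by
    intro t _
    show SfAux G (⌊t⌋.toNat + 1) 0 t = 0
    unfold SfAux
    refine Finset.sum_eq_zero fun k _ => ?_
    rw [hc_0 k, zero_mul]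
  -- bound
  have hbd : ∀ (m : ℕ) (r t : ℝ), 0 ≤ r → (m:ℝ) ≤ t → G m r ≤ G 0 r + chiAux G r t := by
    intro m r t hr hmt
    have ht : (0:ℝ) ≤ t := le_trans (Nat.cast_nonneg m) hmt
    cases m with
    | zero => linarith [hχnn r t hr ht]
    | succ n =>
      have h1 : chiAux G r ((n:ℝ) + 1) ≤ chiAux G r t := by
        refine hχmono r hr _ t (by positivity) ?_
        have hcast : ((n + 1 : ℕ) : ℝ) = (n:ℝ) + 1 := by push_cast; ring
        rw [hcast] at hmt
        exact hmt
      have h2 : G (n+1) r ≤ chiAux G r ((n:ℝ) + 1) := by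
        have heq : chiAux G r ((n:ℝ) + 1) = SfAux G (n+2) r ((n:ℝ) + 1) := by
          refine hχN (n+2) r ((n:ℝ)+1) (by positivity) ?_
          push_cast; linarith
        rw [heq]
        unfold SfAux
        have hterm : cAux G n r * clampR (((n:ℝ) + 1) - (n:ℕ)) = r + G (n+1) r := by
          have hcast : ((n:ℝ) + 1) - (n:ℕ) = 1 := by push_cast; ring
          rw [hcast, clamp_one, mul_one]
          rfl
        calc G (n+1) r ≤ cAux G n r * clampR (((n:ℝ) + 1) - (n:ℕ)) := by rw [hterm]; linarith
          _ ≤ ∑ k ∈ Finset.range (n+2), cAux G k r * clampR (((n:ℝ) + 1) - k) :=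
              Finset.single_le_sum
                (f := fun k : ℕ => cAux G k r * clampR (((n:ℝ) + 1) - (k:ℕ)))
                (fun k _ => mul_nonneg (hc_nn k r hr) (clamp_nonneg _))
                (Finset.mem_range.mpr (by omega))
      have h3 : 0 ≤ G 0 r := hGnn 0 r hr
      linarith
  have hχK : ∀ r : ℝ, 0 < r → ClassK (chiAux G r) := by
    intro r hr
    have hcont : ContinuousOn (fun t => chiAux G r t) (Ici 0) := by
      have hmap : MapsTo (fun t : ℝ => (r, t)) (Ici 0) (Ici (0:ℝ) ×ˢ Ici (0:ℝ)) :=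
        fun t ht => ⟨hr.le, ht⟩
      have h2 := ContinuousOn.comp hχc
        ((continuous_const.prodMk continuous_id).continuousOn) hmap
      exact h2.congr (fun t ht => rfl)
    exact ⟨hcont, hχsm r hr, hχr0 r, fun t ht => hχnn r t hr.le ht⟩
  exact ⟨chiAux G, hχc, hχnn, hχK, hχ0, hbd⟩

/-- RFC together with REP is equivalent to the estimate
`‖φ(t,x,d)‖ ≤ σ(‖x‖) + χ(‖x‖,t)`. -/
theorem rfc_and_rep_iff_sigma_chi {X D : Type*} [NormedAddCommGroup X] (S : DynSys X D) :
    (S.RFC ∧ S.REP) ↔ ∃ (σ : ℝ → ℝ) (χ : ℝ → ℝ → ℝ),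
      ClassKInf σ ∧
      ContinuousOn (fun p : ℝ × ℝ => χ p.1 p.2) (Ici 0 ×ˢ Ici 0) ∧
      (∀ r t : ℝ, 0 ≤ r → 0 ≤ t → 0 ≤ χ r t) ∧
      (∀ r : ℝ, 0 < r → ClassK (χ r)) ∧
      (∀ t : ℝ, 0 ≤ t → χ 0 t = 0) ∧
      ∀ (x : X) (d : D) (t : ℝ), 0 ≤ t → ‖S.phi t x d‖ ≤ σ ‖x‖ + χ ‖x‖ t := by
  constructor
  · rintro ⟨hRFC, hREP⟩
    by_cases hD : Nonempty D
    · obtain ⟨d₀⟩ := hD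
      have hmem0 : ∀ (m : ℕ) (r : ℝ), 0 ≤ r → (0:ℝ) ∈
          {y | ∃ x : X, ∃ d : D, ∃ s : ℝ, ‖x‖ ≤ r ∧ 0 ≤ s ∧ s ≤ (m:ℝ) + 1 ∧
            y = ‖S.phi s x d‖} := by
        intro m r hr
        refine ⟨0, d₀, 0, by simpa using hr, le_rfl, by positivity, ?_⟩
        rw [S.identity, norm_zero]
      have hbdd : ∀ (m : ℕ) (r : ℝ), BddAbove
          {y | ∃ x : X, ∃ d : D, ∃ s : ℝ, ‖x‖ ≤ r ∧ 0 ≤ s ∧ s ≤ (m:ℝ) + 1 ∧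
            y = ‖S.phi s x d‖} := by
        intro m r
        obtain ⟨B, hB⟩ := hRFC (max r 1) (lt_of_lt_of_le one_pos (le_max_right r 1))
          ((m:ℝ) + 1) (by positivity)
        refine ⟨B, ?_⟩
        rintro y ⟨x, d, s, h1, h2, h3, rfl⟩
        exact hB x d s (le_trans h1 (le_max_left r 1)) h2 h3
      set F : ℕ → ℝ → ℝ := fun m r => sSup
        {y | ∃ x : X, ∃ d : D, ∃ s : ℝ, ‖x‖ ≤ r ∧ 0 ≤ s ∧ s ≤ (m:ℝ) + 1 ∧
          y = ‖S.phi s x d‖} with hF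
      have hFmono : ∀ m, MonotoneOn (F m) (Ici 0) := by
        intro m r hr r' hr' hrr
        refine csSup_le_csSup (hbdd m r') ⟨0, hmem0 m r hr⟩ ?_
        rintro y ⟨x, d, s, h1, h2, h3, h4⟩
        exact ⟨x, d, s, le_trans h1 hrr, h2, h3, h4⟩
      have hFnn : ∀ m r, 0 ≤ r → 0 ≤ F m r := fun m r hr =>
        le_csSup (hbdd m r) (hmem0 m r hr)
      have hF0 : ∀ m, ∀ ε > (0:ℝ), ∃ δ > (0:ℝ), F m δ ≤ ε := by
        intro m ε hε
        obtain ⟨δ, hδ, hprop⟩ := hREP.2 ε hε ((m:ℝ) + 1) (by positivity)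
        refine ⟨δ, hδ, csSup_le ⟨0, hmem0 m δ hδ.le⟩ ?_⟩
        rintro y ⟨x, d, s, h1, h2, h3, rfl⟩
        exact hprop s x d h2 h3 h1
      have hmaj : ∀ m, ∃ g, ClassKInf g ∧ ∀ r, 0 ≤ r → F m r ≤ g r :=
        fun m => majorant (F m) (hFmono m) (hFnn m) (hF0 m)
      choose G hGK hGle using hmaj
      obtain ⟨χ, hχc, hχnn, hχK, hχ0, hχbd⟩ := chi_construction G
        (fun m => (hGK m).1.1) (fun m => (hGK m).1.2.2.1) (fun m r hr => (hGK m).1.2.2.2 r hr)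
      refine ⟨G 0, χ, hGK 0, hχc, hχnn, hχK, hχ0, ?_⟩
      intro x d t ht
      have hcast : ((⌊t⌋.toNat : ℝ)) = (⌊t⌋ : ℝ) := by
        exact_mod_cast congrArg (Int.cast : ℤ → ℝ) (Int.toNat_of_nonneg (Int.floor_nonneg.mpr ht))
      have hm1 : ((⌊t⌋.toNat : ℕ) : ℝ) ≤ t := by rw [hcast]; exact Int.floor_le t
      have hm2 : t ≤ ((⌊t⌋.toNat : ℕ) : ℝ) + 1 := by
        rw [hcast]; linarith [Int.lt_floor_add_one t]
      have h1 : ‖S.phi t x d‖ ≤ F ⌊t⌋.toNat ‖x‖ :=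
        le_csSup (hbdd ⌊t⌋.toNat ‖x‖) ⟨x, d, t, le_rfl, ht, hm2, rfl⟩
      have h2 := hGle ⌊t⌋.toNat ‖x‖ (norm_nonneg x)
      have h3 := hχbd ⌊t⌋.toNat ‖x‖ t (norm_nonneg x) hm1
      linarith
    · refine ⟨fun r => r, fun r t => r * t, ?_, ?_, ?_, ?_, ?_, ?_⟩
      · refine ⟨⟨continuousOn_id, fun a _ b _ h => h, rfl, fun r hr => hr⟩, ?_⟩
        intro M
        exact ⟨max M 0 + 1, by positivity, by
          have := le_max_left M 0
          show M < max M 0 + 1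
          linarith⟩
      · exact (continuous_fst.mul continuous_snd).continuousOn
      · exact fun r t hr ht => mul_nonneg hr ht
      · intro r hr
        refine ⟨(continuous_const.mul continuous_id).continuousOn, ?_, mul_zero r,
          fun t ht => mul_nonneg hr.le ht⟩
        intro a _ b _ h
        exact mul_lt_mul_of_pos_left h hr
      · intro t _; exact zero_mul t
      · intro x d; exact absurd ⟨d⟩ hD
  · rintro ⟨σ, χ, hσ, hχc, hχnn, hχK, hχ0, hb⟩
    constructor
    · -- RFC
      intro C hC τ hτ
      have hcomp : IsCompact (Icc (0:ℝ) C ×ˢ Icc (0:ℝ) τ) := isCompact_Icc.prod isCompact_Icc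
      have hsub : (Icc (0:ℝ) C ×ˢ Icc (0:ℝ) τ) ⊆ Ici 0 ×ˢ Ici 0 :=
        prod_mono Icc_subset_Ici_self Icc_subset_Ici_self
      obtain ⟨B, hB⟩ := hcomp.exists_bound_of_continuousOn (hχc.mono hsub)
      refine ⟨σ C + B, ?_⟩
      intro x d t hx ht0 htτ
      have h1 : σ ‖x‖ ≤ σ C :=
        hσ.1.2.1.monotoneOn (norm_nonneg x) hC.le hx
      have h2 : χ ‖x‖ t ≤ B := by
        have h3 := hB (‖x‖, t) ⟨⟨norm_nonneg x, hx⟩, ⟨ht0, htτ⟩⟩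
        rw [Real.norm_eq_abs] at h3
        exact le_trans (le_abs_self _) h3
      calc ‖S.phi t x d‖ ≤ σ ‖x‖ + χ ‖x‖ t := hb x d t ht0
        _ ≤ σ C + B := add_le_add h1 h2
    · -- REP
      constructor
      · intro t d ht
        have h := hb 0 d t ht
        rw [norm_zero, hσ.1.2.2.1, hχ0 t ht, add_zero] at h
        exact norm_le_zero_iff.mp h
      · intro ε hε h hh
        have hσc : ContinuousWithinAt σ (Ici 0) 0 := hσ.1.1 0 (mem_Ici.mpr le_rfl)
        rw [Metric.continuousWithinAt_iff] at hσc
        obtain ⟨δ₁, hδ₁, hσε⟩ := hσc (ε/2) (by linarith)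
        have hχch : ContinuousWithinAt (fun p : ℝ × ℝ => χ p.1 p.2)
            (Ici 0 ×ˢ Ici 0) (0, h) := hχc (0, h) ⟨mem_Ici.mpr le_rfl, mem_Ici.mpr hh.le⟩
        rw [Metric.continuousWithinAt_iff] at hχch
        obtain ⟨δ₂, hδ₂, hχε⟩ := hχch (ε/2) (by linarith)
        refine ⟨min (δ₁/2) (δ₂/2), by positivity, ?_⟩
        intro t x d ht0 hth hxδ
        have hx0 : (0:ℝ) ≤ ‖x‖ := norm_nonneg x
        have hσx : σ ‖x‖ ≤ ε/2 := by
          have hd : dist ‖x‖ (0:ℝ) < δ₁ := by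
            rw [Real.dist_eq, sub_zero, abs_of_nonneg hx0]
            have := min_le_left (δ₁/2) (δ₂/2)
            linarith
          have := hσε hx0 hd
          rw [hσ.1.2.2.1, Real.dist_eq, sub_zero] at this
          exact le_trans (le_abs_self _) this.le
        have hχx : χ ‖x‖ h ≤ ε/2 := by
          have hd : dist ((‖x‖, h) : ℝ × ℝ) (0, h) < δ₂ := by
            rw [Prod.dist_eq]
            have h1 : dist ‖x‖ (0:ℝ) < δ₂ := by
              rw [Real.dist_eq, sub_zero, abs_of_nonneg hx0]
              have := min_le_right (δ₁/2) (δ₂/2)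
              linarith
            have h2 : dist h h = 0 := dist_self h
            rw [h2]
            exact max_lt h1 hδ₂
          have h4 := hχε (⟨mem_Ici.mpr hx0, mem_Ici.mpr hh.le⟩ :
            (‖x‖, h) ∈ Ici (0:ℝ) ×ˢ Ici (0:ℝ)) hd
          rw [Real.dist_eq] at h4
          have h5 : χ 0 h = 0 := hχ0 h hh.le
          rw [h5, sub_zero] at h4
          exact le_trans (le_abs_self _) h4.le
        have hmono : χ ‖x‖ t ≤ χ ‖x‖ h := by
          rcases eq_or_lt_of_le hx0 with h0 | hpos
          · rw [← h0, hχ0 t ht0, hχ0 h hh.le]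
          · exact (hχK _ hpos).2.1.monotoneOn ht0 hh.le hth
        calc ‖S.phi t x d‖ ≤ σ ‖x‖ + χ ‖x‖ t := hb x d t ht0
          _ ≤ σ ‖x‖ + χ ‖x‖ h := by linarith
          _ ≤ ε := by linarith
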